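/- If the set of free states F(A) is nonconvex (there exist free states σ^a and probabilities p_a with Σ_a p_a σ^a not free), then there exists no conditional resource-destroying channel for F(A): i.e., no quantum channel Δ: D(M⊗A) → D(A) satisfying (iii) Δ(ρ) ∈ F(A) for all ρ ∈ D(M⊗A) and (iv) Δ(|m_σ⟩⟨m_σ| ⊗ σ) = σ for all σ ∈ F(A), where |m_σ⟩ are orthonormal description states with ⟨m_σ|m_{σ'}⟩ = δ_{σσ'}. -/

import Mathlib

open Matrix BigOperators ComplexOrder Kronecker

noncomputable section

/-- Outer product |v⟩⟨v| as a matrix. -/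
def outer {n : Type*} (v : n → ℂ) : Matrix n n ℂ := fun i j => v i * star (v j)

/-- Density operator: positive semidefinite with unit trace. -/
def IsDensity {n : Type*} [Fintype n] [DecidableEq n] (ρ : Matrix n n ℂ) : Prop :=
  ρ.PosSemidef ∧ ρ.trace = 1

lemma kron_conjTranspose {m n m' n' : Type*} (A : Matrix m n ℂ) (B : Matrix m' n' ℂ) :
    (A ⊗ₖ B)ᴴ = Aᴴ ⊗ₖ Bᴴ := by
  ext ⟨i, j⟩ ⟨k, l⟩
  simp [Matrix.conjTranspose_apply, Matrix.kroneckerMap_apply, mul_comm]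

lemma psd_kron {m n : Type*} [Fintype m] [Fintype n] [DecidableEq m] [DecidableEq n]
    {A : Matrix m m ℂ} {B : Matrix n n ℂ} (hA : A.PosSemidef) (hB : B.PosSemidef) :
    (A ⊗ₖ B).PosSemidef := by
  exact hA.kronecker hB

lemma outer_psd {n : Type*} [Fintype n] [DecidableEq n] (v : n → ℂ) :
    (outer v).PosSemidef := by
  have h : outer v = (Matrix.replicateCol Unit v) * (Matrix.replicateCol Unit v)ᴴ := by
    ext i j
    simp [outer, Matrix.mul_apply, Matrix.replicateCol, Matrix.conjTranspose_apply]
  rw [h]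
  exact Matrix.posSemidef_self_mul_conjTranspose _

lemma outer_trace {n : Type*} [Fintype n] [DecidableEq n] (v : n → ℂ)
    (hv : (∑ i, star (v i) * v i) = 1) : (outer v).trace = 1 := by
  rw [Matrix.trace]
  simpa [outer, Matrix.diag, mul_comm] using hv

lemma psd_smul {n : Type*} [Fintype n] {A : Matrix n n ℂ} (hA : A.PosSemidef)
    {c : ℝ} (hc : 0 ≤ c) : ((c : ℝ) • A).PosSemidef := by
  have h : (c : ℝ) • A = (c : ℂ) • A := by
    ext i j; simp [Matrix.smul_apply, Complex.real_smul]
  rw [h]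
  refine Matrix.PosSemidef.of_dotProduct_mulVec_nonneg ?_ ?_
  · unfold Matrix.IsHermitian
    rw [Matrix.conjTranspose_smul, hA.1]
    congr 1
    simp [Complex.ext_iff]
  · intro x
    rw [Matrix.smul_mulVec, dotProduct_smul]
    exact mul_nonneg (by exact_mod_cast Complex.zero_le_real.mpr hc) (hA.dotProduct_mulVec_nonneg x)

lemma psd_sum {n : Type*} [Fintype n] {k : ℕ} (A : Fin k → Matrix n n ℂ)
    (hA : ∀ a, (A a).PosSemidef) : (∑ a, A a).PosSemidef := by
  refine Matrix.PosSemidef.of_dotProduct_mulVec_nonneg ?_ ?_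
  · unfold Matrix.IsHermitian
    rw [Matrix.conjTranspose_sum]
    exact Finset.sum_congr rfl fun a _ => (hA a).1
  · intro x
    have key : ∀ (s : Finset (Fin k)), 0 ≤ star x ⬝ᵥ (∑ a ∈ s, A a) *ᵥ x := by
      intro s
      induction s using Finset.induction_on with
      | empty => simp
      | insert a s h ih =>
        rw [Finset.sum_insert h, Matrix.add_mulVec, dotProduct_add]
        exact add_nonneg ((hA _).dotProduct_mulVec_nonneg x) ih
    exact key Finset.univ

/-- if the set of free states is nonconvex, then no conditional
resource-destroying channel exists.  `M` is the description space; each free state `σ`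
has an orthonormal description vector `m σ`, with distinct free states having
orthogonal descriptions. -/
theorem no_conditional_RD_channel_for_nonconvex {d : ℕ} {M : Type*} [Fintype M] [DecidableEq M]
    (F : Set (Matrix (Fin d) (Fin d) ℂ))
    (hFD : ∀ σ ∈ F, IsDensity σ)
    (m : {σ // σ ∈ F} → M → ℂ)
    (horth : ∀ σ τ : {σ // σ ∈ F},
      (∑ i, star (m σ i) * m τ i) = if σ = τ then (1 : ℂ) else 0)
    (hnonconvex : ∃ (k : ℕ) (σ : Fin k → Matrix (Fin d) (Fin d) ℂ) (p : Fin k → ℝ),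
      (∀ a, σ a ∈ F) ∧ (∀ a, 0 ≤ p a) ∧ (∑ a, p a = 1) ∧ (∑ a, p a • σ a) ∉ F) :
    ¬ ∃ Δ : Matrix (M × Fin d) (M × Fin d) ℂ →ₗ[ℝ] Matrix (Fin d) (Fin d) ℂ,
      (∀ ρ, IsDensity ρ → Δ ρ ∈ F) ∧
      (∀ σ (h : σ ∈ F), Δ (outer (m ⟨σ, h⟩) ⊗ₖ σ) = σ) := by
  rintro ⟨Δ, hfree, hfix⟩
  obtain ⟨k, σ, p, hσF, hp0, hp1, hnot⟩ := hnonconvex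
  -- the density matrices outer (m σa) ⊗ σa
  set X : Fin k → Matrix (M × Fin d) (M × Fin d) ℂ :=
    fun a => outer (m ⟨σ a, hσF a⟩) ⊗ₖ σ a with hX
  have hXdens : ∀ a, IsDensity (X a) := by
    intro a
    have hσa := hFD (σ a) (hσF a)
    have houter_tr : (outer (m ⟨σ a, hσF a⟩)).trace = 1 := by
      apply outer_trace
      simpa using horth ⟨σ a, hσF a⟩ ⟨σ a, hσF a⟩
    refine ⟨psd_kron (outer_psd _) hσa.1, ?_⟩
    rw [hX, Matrix.trace_kronecker, houter_tr, hσa.2, one_mul]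
  -- the mixture
  have hρdens : IsDensity (∑ a, p a • X a) := by
    constructor
    · exact psd_sum _ fun a => psd_smul (hXdens a).1 (hp0 a)
    · have : (∑ a, p a • X a).trace = ∑ a, ((p a : ℂ) * (X a).trace) := by
        rw [Matrix.trace_sum]
        refine Finset.sum_congr rfl fun a _ => ?_
        have : p a • X a = (p a : ℂ) • X a := by
          ext i j; simp [Matrix.smul_apply, Complex.real_smul]
        rw [this, Matrix.trace_smul, smul_eq_mul]
      rw [this]
      have : ∀ a ∈ Finset.univ, ((p a : ℂ) * (X a).trace) = (p a : ℂ) := by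
        intro a _; rw [(hXdens a).2, mul_one]
      rw [Finset.sum_congr rfl this]
      exact_mod_cast congrArg (Complex.ofReal) hp1
  -- apply the channel
  have hΔρ : Δ (∑ a, p a • X a) = ∑ a, p a • σ a := by
    rw [map_sum]
    refine Finset.sum_congr rfl fun a _ => ?_
    rw [Δ.map_smul, hfix (σ a) (hσF a)]
  exact hnot (hΔρ ▸ hfree _ hρdens)
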